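/- (Weyl-chamber reflection enumeration, d walkers, type A) For strictly decreasing integer vectors μ, λ ∈ W_d, the exponential generating function of the number Z_d(N; μ, λ) of N-step nearest-neighbor walks from μ to λ staying in W_d is Σ_{N≥0} Z_d(N;μ,λ) x^N/N! = det(I_{λ_i − μ_j}(2x))_{1≤i,j≤d}, where I_k is the modified Bessel function. -/

import Mathlib

open PowerSeries Matrix

/-- The modified Bessel function `I_k(2x)` of integer order `k`, as a formal power series:
`I_k(2x) = Σ_{m ≥ max(0, −k)} x^{2m+k} / (m!(m+k)!)` (equal to `Σ_{m≥0} x^{2m+|k|}/(m!(m+|k|)!)`). -/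
noncomputable def besselI (k : ℤ) : PowerSeries ℚ :=
  PowerSeries.mk fun N =>
    if 2 ∣ ((N : ℤ) - k) ∧ k ≤ (N : ℤ) ∧ -k ≤ (N : ℤ) then
      1 / ((Nat.factorial (((N : ℤ) - k) / 2).toNat) *
           (Nat.factorial (((N : ℤ) + k) / 2).toNat))
    else 0

/-- The number `Z_d(N; μ, λ)` of `N`-step nearest-neighbor walks from `μ` to `λ` in the
Weyl lattice `W_d` of strictly decreasing integer vectors. -/
noncomputable def Zd (d N : ℕ) (μ lam : Fin d → ℤ) : ℕ :=
  Set.ncard {p : Fin (N + 1) → Fin d → ℤ |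
    p 0 = μ ∧ p (Fin.last N) = lam ∧ (∀ k, StrictAnti (p k)) ∧
      ∀ k : Fin N, ∃ i : Fin d,
        p k.succ = p k.castSucc + Pi.single i 1 ∨ p k.succ = p k.castSucc - Pi.single i 1}

section Aux
variable {d N : ℕ} {μ lam : Fin d → ℤ}

noncomputable def g (a b : ℤ) : ℚ :=
  if 0 ≤ a ∧ 0 ≤ b then 1 / (a.toNat.factorial * b.toNat.factorial) else 0

lemma coeff_besselI (k : ℤ) (n : ℕ) :
    (PowerSeries.coeff n) (besselI k)
      = if 2 ∣ ((n : ℤ) - k) then g (((n:ℤ) - k)/2) (((n:ℤ) + k)/2) else 0 := by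
  rw [besselI, coeff_mk]
  by_cases hd : 2 ∣ ((n : ℤ) - k)
  · rw [if_pos hd, g]
    by_cases h1 : k ≤ (n : ℤ)
    · have h1' : 0 ≤ ((n:ℤ) - k) / 2 := Int.ediv_nonneg (by omega) (by norm_num)
      by_cases h2 : -k ≤ (n : ℤ)
      · have hd2 : 2 ∣ ((n:ℤ) + k) := by omega
        have h2' : 0 ≤ ((n:ℤ) + k) / 2 := Int.ediv_nonneg (by omega) (by norm_num)
        rw [if_pos ⟨hd, h1, h2⟩, if_pos ⟨h1', h2'⟩]
      · have hd2 : 2 ∣ ((n:ℤ) + k) := by omega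
        have : ((n:ℤ) + k) / 2 < 0 := by
          rcases hd2 with ⟨t, ht⟩; omega
        rw [if_neg (by tauto), if_neg (by omega)]
    · have : ((n:ℤ) - k) / 2 < 0 := by
        rcases hd with ⟨t, ht⟩; omega
      rw [if_neg (by tauto), if_neg (by omega)]
  · rw [if_neg hd, if_neg (by tauto)]

lemma g_identity (A B : ℤ) (h : 1 ≤ A + B) :
    (A + B) * g A B = g A (B - 1) + g (A - 1) B := by
  rcases lt_or_ge A 0 with hA | hA
  · rw [g, g, g, if_neg (by omega), if_neg (by omega), if_neg (by omega)]; ring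
  rcases lt_or_ge B 0 with hB | hB
  · rw [g, g, g, if_neg (by omega), if_neg (by omega), if_neg (by omega)]; ring
  rcases eq_or_lt_of_le hB with hB0 | hB1
  · -- B = 0, A ≥ 1
    have hA1 : 1 ≤ A := by omega
    obtain ⟨a, rfl⟩ : ∃ a : ℕ, A = (a : ℤ) + 1 := ⟨(A - 1).toNat, by omega⟩
    rw [g, g, g, if_pos ⟨by omega, hB⟩, if_neg (by omega), if_pos ⟨by omega, hB⟩]
    have e1 : ((a : ℤ) + 1).toNat = a + 1 := by omega
    have e2 : ((a : ℤ) + 1 - 1).toNat = a := by omega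
    have e3 : B.toNat = 0 := by omega
    rw [e1, e2, e3, ← hB0]
    rw [Nat.factorial_succ]
    push_cast
    have : ((a : ℚ) + 1) ≠ 0 := by positivity
    have hfa : ((a.factorial : ℚ)) ≠ 0 := by positivity
    field_simp
    simp
  rcases eq_or_lt_of_le hA with hA0 | hA1
  · -- A = 0, B ≥ 1
    obtain ⟨b, rfl⟩ : ∃ b : ℕ, B = (b : ℤ) + 1 := ⟨(B - 1).toNat, by omega⟩
    rw [g, g, g, if_pos ⟨hA, by omega⟩, if_pos ⟨hA, by omega⟩, if_neg (by omega)]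
    have e1 : ((b : ℤ) + 1).toNat = b + 1 := by omega
    have e2 : ((b : ℤ) + 1 - 1).toNat = b := by omega
    have e3 : A.toNat = 0 := by omega
    rw [e1, e2, e3, ← hA0]
    rw [Nat.factorial_succ]
    push_cast
    have : ((b : ℚ) + 1) ≠ 0 := by positivity
    have hfb : ((b.factorial : ℚ)) ≠ 0 := by positivity
    field_simp
    simp
  · -- A ≥ 1, B ≥ 1
    obtain ⟨a, rfl⟩ : ∃ a : ℕ, A = (a : ℤ) + 1 := ⟨(A - 1).toNat, by omega⟩
    obtain ⟨b, rfl⟩ : ∃ b : ℕ, B = (b : ℤ) + 1 := ⟨(B - 1).toNat, by omega⟩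
    rw [g, g, g, if_pos ⟨by omega, by omega⟩, if_pos ⟨by omega, by omega⟩,
      if_pos ⟨by omega, by omega⟩]
    have e1 : ((a : ℤ) + 1).toNat = a + 1 := by omega
    have e2 : ((a : ℤ) + 1 - 1).toNat = a := by omega
    have e3 : ((b : ℤ) + 1).toNat = b + 1 := by omega
    have e4 : ((b : ℤ) + 1 - 1).toNat = b := by omega
    rw [e1, e2, e3, e4, Nat.factorial_succ a, Nat.factorial_succ b]
    push_cast
    have ha : ((a : ℚ) + 1) ≠ 0 := by positivity
    have hb : ((b : ℚ) + 1) ≠ 0 := by positivity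
    have hfa : ((a.factorial : ℚ)) ≠ 0 := by positivity
    have hfb : ((b.factorial : ℚ)) ≠ 0 := by positivity
    field_simp
    ring

lemma besselI_derivative (k : ℤ) :
    d⁄dX ℚ (besselI k) = besselI (k - 1) + besselI (k + 1) := by
  ext n
  rw [coeff_derivative, map_add, coeff_besselI, coeff_besselI, coeff_besselI]
  by_cases hd : 2 ∣ ((n : ℤ) + 1 - k)
  · have hd1 : 2 ∣ ((n : ℤ) - (k - 1)) := by omega
    have hd2 : 2 ∣ ((n : ℤ) - (k + 1)) := by omega
    have hcast : ((n : ℤ) + 1) = ((n + 1 : ℕ) : ℤ) := by push_cast; ring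
    rw [if_pos (by omega : 2 ∣ (((n+1 : ℕ) : ℤ) - k)), if_pos hd1, if_pos hd2]
    have key := g_identity ((((n:ℤ)+1) - k)/2) ((((n:ℤ)+1) + k)/2) (by
      have h2 : 2 ∣ ((n:ℤ) + 1 + k) := by omega
      rcases hd with ⟨t, ht⟩; rcases h2 with ⟨u, hu⟩; omega)
    have hsum : ((((n:ℤ)+1) - k)/2) + ((((n:ℤ)+1) + k)/2) = (n : ℤ) + 1 := by
      have h2 : 2 ∣ ((n:ℤ) + 1 + k) := by omega
      rcases hd with ⟨t, ht⟩; rcases h2 with ⟨u, hu⟩; omega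
    have hsumQ : (((((n:ℤ)+1) - k)/2 : ℤ) : ℚ) + (((((n:ℤ)+1) + k)/2 : ℤ) : ℚ)
        = (n : ℚ) + 1 := by exact_mod_cast hsum
    rw [hsumQ] at key
    have e1 : ((n:ℤ) - (k-1))/2 = (((n:ℤ)+1) - k)/2 := by ring_nf
    have e2 : ((n:ℤ) + (k-1))/2 = (((n:ℤ)+1) + k)/2 - 1 := by
      have h2 : 2 ∣ ((n:ℤ) + 1 + k) := by omega
      rcases h2 with ⟨u, hu⟩; omega
    have e3 : ((n:ℤ) - (k+1))/2 = (((n:ℤ)+1) - k)/2 - 1 := by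
      rcases hd with ⟨t, ht⟩; omega
    have e4 : ((n:ℤ) + (k+1))/2 = (((n:ℤ)+1) + k)/2 := by ring_nf
    rw [← hcast, e1, e2, e3, e4, mul_comm]
    convert key using 2
  · rw [if_neg (by push_cast; omega), if_neg (by omega), if_neg (by omega)]
    ring

lemma D_prod {A : Type*} [CommRing A] [Algebra ℚ A] (D : Derivation ℚ A A)
    {ι : Type*} [DecidableEq ι] (s : Finset ι) (f : ι → A) :
    D (∏ i ∈ s, f i) = ∑ i ∈ s, D (f i) * ∏ j ∈ s.erase i, f j := by
  induction s using Finset.induction_on with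
  | empty => simp
  | @insert a s ha ih =>
    rw [Finset.prod_insert ha, D.leibniz, smul_eq_mul, smul_eq_mul, ih, Finset.sum_insert ha,
      Finset.erase_insert ha, Finset.mul_sum]
    rw [mul_comm (∏ i ∈ s, f i) (D (f a)), add_comm]
    congr 1
    refine Finset.sum_congr rfl fun i hi => ?_
    have hia : i ≠ a := fun h => ha (h ▸ hi)
    rw [Finset.erase_insert_of_ne hia.symm,
      Finset.prod_insert (fun h => ha (Finset.mem_of_mem_erase h))]
    ring

lemma D_det_col {A : Type*} [CommRing A] [Algebra ℚ A] (D : Derivation ℚ A A)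
    {d : ℕ} (F : Matrix (Fin d) (Fin d) A) :
    D F.det = ∑ j, (F.updateCol j fun i => D (F i j)).det := by
  simp only [Matrix.det_apply]
  rw [map_sum, Finset.sum_comm]
  refine Finset.sum_congr rfl fun σ _ => ?_
  rw [Units.smul_def, map_zsmul, D_prod, Finset.smul_sum]
  refine Finset.sum_congr rfl fun j _ => ?_
  rw [← Units.smul_def]
  congr 1
  rw [← Finset.mul_prod_erase Finset.univ _ (Finset.mem_univ j)]
  congr 1
  · simp [Matrix.updateCol_apply]
  · refine Finset.prod_congr rfl fun i hi => ?_
    rw [Matrix.updateCol_apply, if_neg (Finset.ne_of_mem_erase hi)]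

lemma D_det_row {A : Type*} [CommRing A] [Algebra ℚ A] (D : Derivation ℚ A A)
    {d : ℕ} (F : Matrix (Fin d) (Fin d) A) :
    D F.det = ∑ i, (F.updateRow i fun j => D (F i j)).det := by
  rw [← Matrix.det_transpose F, D_det_col D]
  refine Finset.sum_congr rfl fun i _ => ?_
  rw [Matrix.updateCol_transpose, Matrix.det_transpose]
  rfl

lemma perm_le {d : ℕ} (f : Equiv.Perm (Fin d)) (hf : StrictMono f) :
    ∀ i : Fin d, (i:ℕ) ≤ (f i : ℕ) := by
  have key : ∀ m : ℕ, ∀ i : Fin d, (i : ℕ) = m → m ≤ (f i : ℕ) := by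
    intro m
    induction m with
    | zero => intro i _; exact Nat.zero_le _
    | succ m ih =>
      intro i hi
      have hm : m < d := by omega
      have hj : (⟨m, hm⟩ : Fin d) < i := by simp [Fin.lt_def]; omega
      have := hf hj
      have h2 := ih ⟨m, hm⟩ rfl
      have : (f ⟨m, hm⟩ : ℕ) < (f i : ℕ) := this
      omega
  intro i; exact key i i rfl

lemma perm_strictMono_eq {d : ℕ} (f : Equiv.Perm (Fin d)) (hf : StrictMono f) :
    ∀ i, f i = i := by
  have hsymm : StrictMono f.symm := by
    intro a b hab
    have : f (f.symm a) < f (f.symm b) := by simpa using hab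
    exact (hf.lt_iff_lt).mp this
  intro i
  have h1 := perm_le f hf i
  have h2 := perm_le f.symm hsymm (f i)
  rw [Equiv.symm_apply_apply] at h2
  exact Fin.ext (le_antisymm h2 h1)

lemma det_indicator {d : ℕ} (μ ν : Fin d → ℤ) (hμ : StrictAnti μ) (hν : StrictAnti ν) :
    (Matrix.det (Matrix.of fun i j : Fin d => if ν i = μ j then (1:ℚ) else 0))
      = if ν = μ then 1 else 0 := by
  by_cases h : ν = μ
  · subst h
    rw [if_pos rfl]
    have : (Matrix.of fun i j : Fin d => if ν i = ν j then (1:ℚ) else 0) = 1 := by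
      ext i j
      rw [Matrix.one_apply]
      by_cases hij : i = j
      · simp [hij]
      · have : ν i ≠ ν j := fun he => hij (hν.injective he)
        simp [hij, this]
    rw [this, Matrix.det_one]
  · rw [if_neg h, Matrix.det_apply]
    refine Finset.sum_eq_zero fun σ _ => ?_
    by_cases hall : ∀ i, ν (σ i) = μ i
    · exfalso
      have hmono : StrictMono σ := by
        intro i j hij
        have : ν (σ i) > ν (σ j) := by rw [hall i, hall j]; exact hμ hij
        exact hν.lt_iff_gt.mp this
      apply h
      funext i
      have := perm_strictMono_eq σ hmono i
      rw [← hall i, this]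
    · push_neg at hall
      obtain ⟨i, hi⟩ := hall
      rw [Finset.prod_eq_zero (Finset.mem_univ i) (by simp [Matrix.of_apply, hi]), smul_zero]

def stepVec {d : ℕ} (x : Fin d × Bool) : Fin d → ℤ :=
  if x.2 then Pi.single x.1 1 else -Pi.single x.1 1

def WalkSet (d N : ℕ) (μ lam : Fin d → ℤ) : Set (Fin (N + 1) → Fin d → ℤ) :=
  {p : Fin (N + 1) → Fin d → ℤ |
    p 0 = μ ∧ p (Fin.last N) = lam ∧ (∀ k, StrictAnti (p k)) ∧
      ∀ k : Fin N, ∃ i : Fin d,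
        p k.succ = p k.castSucc + Pi.single i 1 ∨ p k.succ = p k.castSucc - Pi.single i 1}

lemma Zd_eq_ncard (d N : ℕ) (μ lam : Fin d → ℤ) : Zd d N μ lam = (WalkSet d N μ lam).ncard := rfl

lemma stepVec_apply {d : ℕ} (i : Fin d) (b : Bool) (j : Fin d) :
    stepVec (i, b) j = if j = i then (if b then 1 else -1) else 0 := by
  cases b <;> simp [stepVec, Pi.single_apply] <;> split <;> simp

lemma stepVec_injective {d : ℕ} : Function.Injective (stepVec (d := d)) := by
  rintro ⟨i, b⟩ ⟨i', b'⟩ h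
  have hi := congrFun h i
  rw [stepVec_apply, stepVec_apply, if_pos rfl] at hi
  by_cases hii : i = i'
  · subst hii
    rw [if_pos rfl] at hi
    cases b <;> cases b' <;> simp_all
  · rw [if_neg hii] at hi
    cases b <;> simp_all
lemma walk_bound {d N : ℕ} {μ lam : Fin d → ℤ} {p : Fin (N + 1) → Fin d → ℤ}
    (hp : p ∈ WalkSet d N μ lam) : ∀ (k : Fin (N + 1)) (i : Fin d), |p k i - μ i| ≤ (k : ℕ) := by
  intro k
  induction k using Fin.induction with
  | zero => intro i; rw [hp.1]; simp
  | succ j ih =>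
    intro i
    obtain ⟨i0, h | h⟩ := hp.2.2.2 j <;>
    · rw [h]
      have hle := ih i
      rw [abs_le] at hle
      rw [abs_le]
      simp only [Fin.coe_castSucc] at hle
      simp only [Pi.add_apply, Pi.sub_apply, Pi.single_apply, Fin.val_succ]
      by_cases hii : i = i0
      · subst hii
        rw [if_pos rfl]
        push_cast
        constructor <;> omega
      · rw [if_neg hii]
        push_cast
        constructor <;> omega

lemma walkSet_finite (d N : ℕ) (μ lam : Fin d → ℤ) : (WalkSet d N μ lam).Finite := by
  apply Set.Finite.subset
    (Set.Finite.pi (fun k : Fin (N+1) =>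
      Set.Finite.pi (fun i : Fin d => Set.finite_Icc (μ i - N) (μ i + N))))
  intro p hp
  rw [Set.mem_pi]
  intro k _
  rw [Set.mem_pi]
  intro i _
  have := walk_bound hp k i
  have hk : (k : ℕ) ≤ N := Fin.is_le k
  rw [Set.mem_Icc]
  rw [abs_le] at this
  constructor <;> omega

lemma Zd_zero_of_pair {d N : ℕ} {μ ν : Fin d → ℤ} (h : ∃ i j, i ≠ j ∧ ν i = ν j) :
    Zd d N μ ν = 0 := by
  rw [Zd_eq_ncard]
  have hempty : WalkSet d N μ ν = ∅ := by
    rw [Set.eq_empty_iff_forall_notMem]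
    rintro p ⟨-, hend, hsa, -⟩
    obtain ⟨i, j, hij, hv⟩ := h
    rcases lt_or_gt_of_ne hij with hlt | hlt
    · have := hsa (Fin.last N) hlt; rw [hend] at this; omega
    · have := hsa (Fin.last N) hlt; rw [hend] at this; omega
  rw [hempty, Set.ncard_empty]

lemma Zd_zero_eq {d : ℕ} {μ : Fin d → ℤ} (hμ : StrictAnti μ) (ν : Fin d → ℤ) :
    Zd d 0 μ ν = if ν = μ then 1 else 0 := by
  rw [Zd_eq_ncard]
  by_cases h : ν = μ
  · subst h
    rw [if_pos rfl]
    have : WalkSet d 0 ν ν = {fun _ => ν} := by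
      ext p
      constructor
      · rintro ⟨h0, -, -, -⟩
        funext k i
        have : k = 0 := Fin.ext (by omega)
        rw [this, h0]
      · rintro rfl
        exact ⟨rfl, rfl, fun _ => hμ, fun k => k.elim0⟩
    rw [this, Set.ncard_singleton]
  · rw [if_neg h]
    have hempty : WalkSet d 0 μ ν = ∅ := by
      rw [Set.eq_empty_iff_forall_notMem]
      rintro p ⟨h0, hend, -, -⟩
      exact h (by rw [← hend, ← h0]; rfl)
    rw [hempty, Set.ncard_empty]

lemma sub_stepVec_true (v : Fin d → ℤ) (i : Fin d) :
    (v - stepVec (i, true)) + Pi.single i 1 = v := by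
  funext j; simp [stepVec]

lemma sub_stepVec_false (v : Fin d → ℤ) (i : Fin d) :
    (v - stepVec (i, false)) - Pi.single i 1 = v := by
  funext j; simp [stepVec]

noncomputable def snocWalk (hlam : StrictAnti lam)
    (q : Σ x : Fin d × Bool, (WalkSet d N μ (lam - stepVec x))) :
    (WalkSet d (N + 1) μ lam) := by
  obtain ⟨x, p, hp⟩ := q
  refine ⟨Fin.snoc p lam, ?_, ?_, ?_, ?_⟩
  · rw [show (0 : Fin (N + 2)) = Fin.castSucc 0 from rfl, Fin.snoc_castSucc]
    exact hp.1
  · rw [Fin.snoc_last]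
  · intro k
    induction k using Fin.lastCases with
    | last => rw [Fin.snoc_last]; exact hlam
    | cast j => rw [Fin.snoc_castSucc]; exact hp.2.2.1 j
  · intro k
    induction k using Fin.lastCases with
    | last =>
      refine ⟨x.1, ?_⟩
      rw [Fin.succ_last, Fin.snoc_last, Fin.snoc_castSucc, hp.2.1]
      obtain ⟨i0, b⟩ := x
      cases b
      · exact Or.inr (sub_stepVec_false lam i0).symm
      · exact Or.inl (sub_stepVec_true lam i0).symm
    | cast j =>
      obtain ⟨i, hstep | hstep⟩ := hp.2.2.2 j
      · exact ⟨i, Or.inl (by rw [Fin.succ_castSucc, Fin.snoc_castSucc, Fin.snoc_castSucc]; exact hstep)⟩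
      · exact ⟨i, Or.inr (by rw [Fin.succ_castSucc, Fin.snoc_castSucc, Fin.snoc_castSucc]; exact hstep)⟩

lemma snocWalk_val (hlam : StrictAnti lam)
    (q : Σ x : Fin d × Bool, (WalkSet d N μ (lam - stepVec x))) :
    (snocWalk hlam q).val = Fin.snoc q.2.1 lam := by
  obtain ⟨x, p, hp⟩ := q
  rfl

lemma snocWalk_bijective (hlam : StrictAnti lam) :
    Function.Bijective (snocWalk (μ := μ) (N := N) hlam) := by
  constructor
  · rintro ⟨x, p, hp⟩ ⟨x', p', hp'⟩ h
    have hval : (Fin.snoc p lam : Fin (N+2) → Fin d → ℤ) = Fin.snoc p' lam := by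
      have := congrArg Subtype.val h
      rwa [snocWalk_val, snocWalk_val] at this
    have hpq : p = p' := by
      funext a
      have := congrFun hval a.castSucc
      rwa [Fin.snoc_castSucc, Fin.snoc_castSucc] at this
    subst hpq
    have hx : x = x' := by
      apply stepVec_injective
      have h1 := hp.2.1
      have h2 := hp'.2.1
      rw [h1] at h2
      funext j
      have h3 := congrFun h2 j
      simp only [Pi.sub_apply] at h3
      omega
    subst hx
    rfl
  · rintro ⟨P, hP⟩
    obtain ⟨i, hi | hi⟩ := hP.2.2.2 (Fin.last N)
    · refine ⟨⟨(i, true), fun a => P a.castSucc, ?_, ?_, ?_, ?_⟩, ?_⟩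
      · exact hP.1
      · have hlast : P (Fin.last N).succ = lam := by rw [Fin.succ_last]; exact hP.2.1
        rw [hlast] at hi
        rw [show stepVec (i, true) = Pi.single i 1 from rfl]
        exact eq_sub_of_add_eq hi.symm
      · intro k; exact hP.2.2.1 k.castSucc
      · intro k
        obtain ⟨i', hs | hs⟩ := hP.2.2.2 k.castSucc
        · refine ⟨i', Or.inl ?_⟩
          show P k.succ.castSucc = P k.castSucc.castSucc + Pi.single i' 1
          rwa [Fin.succ_castSucc] at hs
        · refine ⟨i', Or.inr ?_⟩
          show P k.succ.castSucc = P k.castSucc.castSucc - Pi.single i' 1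
          rwa [Fin.succ_castSucc] at hs
      · apply Subtype.ext
        rw [snocWalk_val]
        funext a
        induction a using Fin.lastCases with
        | last => rw [Fin.snoc_last]; exact hP.2.1.symm
        | cast b => rw [Fin.snoc_castSucc]
    · refine ⟨⟨(i, false), fun a => P a.castSucc, ?_, ?_, ?_, ?_⟩, ?_⟩
      · exact hP.1
      · have hlast : P (Fin.last N).succ = lam := by rw [Fin.succ_last]; exact hP.2.1
        rw [hlast] at hi
        have : stepVec (i, false) = -Pi.single i 1 := rfl
        rw [this, sub_neg_eq_add]
        rw [eq_sub_iff_add_eq] at hi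
        exact hi.symm
      · intro k; exact hP.2.2.1 k.castSucc
      · intro k
        obtain ⟨i', hs | hs⟩ := hP.2.2.2 k.castSucc
        · refine ⟨i', Or.inl ?_⟩
          show P k.succ.castSucc = P k.castSucc.castSucc + Pi.single i' 1
          rwa [Fin.succ_castSucc] at hs
        · refine ⟨i', Or.inr ?_⟩
          show P k.succ.castSucc = P k.castSucc.castSucc - Pi.single i' 1
          rwa [Fin.succ_castSucc] at hs
      · apply Subtype.ext
        rw [snocWalk_val]
        funext a
        induction a using Fin.lastCases with
        | last => rw [Fin.snoc_last]; exact hP.2.1.symm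
        | cast b => rw [Fin.snoc_castSucc]

noncomputable def Zd' (d N : ℕ) (μ lam : Fin d → ℤ) : ℕ := (WalkSet d N μ lam).ncard

lemma Zd'_rec (hlam : StrictAnti lam) :
    Zd' d (N + 1) μ lam = ∑ x : Fin d × Bool, Zd' d N μ (lam - stepVec x) := by
  haveI hfin : ∀ x : Fin d × Bool, Finite (WalkSet d N μ (lam - stepVec x)) :=
    fun x => (walkSet_finite d N μ _).to_subtype
  letI : ∀ x : Fin d × Bool, Fintype (WalkSet d N μ (lam - stepVec x)) :=
    fun x => Fintype.ofFinite _
  have h1 : Nat.card (Σ x : Fin d × Bool, (WalkSet d N μ (lam - stepVec x)))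
      = Nat.card (WalkSet d (N + 1) μ lam) :=
    Nat.card_eq_of_bijective _ (snocWalk_bijective hlam)
  rw [Zd', ← Nat.card_coe_set_eq, ← h1, Nat.card_eq_fintype_card, Fintype.card_sigma]
  refine Finset.sum_congr rfl fun x _ => ?_
  rw [Zd', ← Nat.card_coe_set_eq, Nat.card_eq_fintype_card]

lemma Zd_rec (hlam : StrictAnti lam) :
    Zd d (N + 1) μ lam = ∑ x : Fin d × Bool, Zd d N μ (lam - stepVec x) := by
  rw [Zd_eq_ncard]
  rw [show (WalkSet d (N+1) μ lam).ncard = Zd' d (N+1) μ lam from rfl, Zd'_rec hlam]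
  rfl

lemma admissible_step {ν : Fin d → ℤ} (hν : StrictAnti ν) (x : Fin d × Bool) :
    StrictAnti (ν - stepVec x) ∨ ∃ i j, i ≠ j ∧ (ν - stepVec x) i = (ν - stepVec x) j := by
  by_cases hpair : ∃ i j, i ≠ j ∧ (ν - stepVec x) i = (ν - stepVec x) j
  · exact Or.inr hpair
  · push_neg at hpair
    left
    intro i j hij
    obtain ⟨i0, b⟩ := x
    have h1 : ν j < ν i := hν hij
    have hsvi := stepVec_apply i0 b i
    have hsvj := stepVec_apply i0 b j
    have hne := hpair j i (Fin.ne_of_gt hij)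
    simp only [Pi.sub_apply] at hne ⊢
    by_cases hi : i = i0 <;> by_cases hj : j = i0 <;>
      rw [hsvi, hsvj] at * <;> simp only [hi, hj, if_pos, if_neg, if_true] at * <;>
      first
        | (exfalso; exact hij.ne (hi.trans hj.symm))
        | (cases b <;> simp_all <;> omega)

lemma constCoeff_besselI (k : ℤ) :
    PowerSeries.constantCoeff (besselI k) = if k = 0 then 1 else 0 := by
  rw [← PowerSeries.coeff_zero_eq_constantCoeff, coeff_besselI]
  simp only [Nat.cast_zero]
  by_cases hk : k = 0
  · subst hk
    norm_num [g]
  · rw [if_neg hk]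
    by_cases hd : 2 ∣ ((0 : ℤ) - k)
    · rw [if_pos hd, g]
      rw [if_neg]
      rintro ⟨h1, h2⟩
      rcases hd with ⟨t, ht⟩
      omega
    · rw [if_neg hd]

lemma M_step (ν : Fin d → ℤ) (i0 : Fin d) (b : Bool) :
    (Matrix.of fun i j : Fin d => besselI ((ν - stepVec (i0, b)) i - μ j))
      = Matrix.updateRow (Matrix.of fun i j : Fin d => besselI (ν i - μ j)) i0
          (fun j => besselI (ν i0 - (if b then 1 else -1) - μ j)) := by
  ext i j
  rw [Matrix.updateRow_apply]
  by_cases hi : i = i0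
  · subst hi
    rw [if_pos rfl, Matrix.of_apply]
    congr 1
    rw [Pi.sub_apply, stepVec_apply, if_pos rfl]
    try ring
  · rw [if_neg hi, Matrix.of_apply, Matrix.of_apply]
    congr 1
    simp only [Pi.sub_apply, stepVec_apply, if_neg hi]
    try ring

lemma main_formula {d : ℕ} (μ : Fin d → ℤ) (hμ : StrictAnti μ) :
    ∀ (N : ℕ) (ν : Fin d → ℤ), (StrictAnti ν ∨ ∃ i j, i ≠ j ∧ ν i = ν j) →
    (Zd d N μ ν : ℚ) = N.factorial *
      (PowerSeries.coeff N) (Matrix.det (Matrix.of fun i j : Fin d => besselI (ν i - μ j))) := by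
  intro N
  induction N with
  | zero =>
    intro ν hadm
    by_cases hpair : ∃ i j, i ≠ j ∧ ν i = ν j
    · obtain ⟨i, j, hij, he⟩ := hpair
      rw [Zd_zero_of_pair ⟨i, j, hij, he⟩]
      have hdet : (Matrix.det (Matrix.of fun i j : Fin d => besselI (ν i - μ j))) = 0 :=
        Matrix.det_zero_of_row_eq hij (funext fun j' => by simp only [Matrix.of_apply]; rw [he])
      rw [hdet]
      simp
    · have hν := hadm.resolve_right hpair
      rw [Zd_zero_eq hμ ν, PowerSeries.coeff_zero_eq_constantCoeff, RingHom.map_det,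
        RingHom.mapMatrix_apply]
      have hmap : (Matrix.of fun i j : Fin d => besselI (ν i - μ j)).map
            (PowerSeries.constantCoeff (R := ℚ))
          = Matrix.of fun i j : Fin d => if ν i = μ j then (1 : ℚ) else 0 := by
        ext i j
        rw [Matrix.map_apply, Matrix.of_apply, Matrix.of_apply, constCoeff_besselI]
        congr 1
        simp [sub_eq_zero]
      rw [hmap, det_indicator μ ν hμ hν]
      simp only [Nat.factorial_zero, Nat.cast_one, one_mul]
      split <;> simp
  | succ N ih =>
    intro ν hadm
    by_cases hpair : ∃ i j, i ≠ j ∧ ν i = ν j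
    · obtain ⟨i, j, hij, he⟩ := hpair
      rw [Zd_zero_of_pair ⟨i, j, hij, he⟩]
      have hdet : (Matrix.det (Matrix.of fun i j : Fin d => besselI (ν i - μ j))) = 0 :=
        Matrix.det_zero_of_row_eq hij (funext fun j' => by simp only [Matrix.of_apply]; rw [he])
      rw [hdet]
      simp
    · have hν := hadm.resolve_right hpair
      rw [Zd_rec hν]
      push_cast
      have hIH : ∀ x : Fin d × Bool, (Zd d N μ (ν - stepVec x) : ℚ) = N.factorial *
          (PowerSeries.coeff N)
            (Matrix.det (Matrix.of fun i j : Fin d => besselI ((ν - stepVec x) i - μ j))) :=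
        fun x => ih (ν - stepVec x) (admissible_step hν x)
      rw [Finset.sum_congr rfl fun x _ => hIH x]
      rw [← Finset.mul_sum]
      have hder : d⁄dX ℚ (Matrix.det (Matrix.of fun i j : Fin d => besselI (ν i - μ j)))
          = ∑ x : Fin d × Bool,
              Matrix.det (Matrix.of fun i j : Fin d => besselI ((ν - stepVec x) i - μ j)) := by
        rw [D_det_row, Fintype.sum_prod_type]
        refine Finset.sum_congr rfl fun i0 _ => ?_
        rw [Fintype.sum_bool]
        have hrow : (fun j => d⁄dX ℚ ((Matrix.of fun i j : Fin d => besselI (ν i - μ j)) i0 j))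
            = fun j => besselI (ν i0 - 1 - μ j) + besselI (ν i0 + 1 - μ j) := by
          funext j
          rw [Matrix.of_apply, besselI_derivative]
          congr 1 <;> congr 1 <;> ring
        rw [hrow]
        have hsplit : (fun j => besselI (ν i0 - 1 - μ j) + besselI (ν i0 + 1 - μ j))
            = (fun j => besselI (ν i0 - 1 - μ j)) + fun j => besselI (ν i0 + 1 - μ j) := rfl
        rw [hsplit, Matrix.det_updateRow_add]
        rw [M_step ν i0 true, M_step ν i0 false]
        norm_num
      have hco : (PowerSeries.coeff N)
            (d⁄dX ℚ (Matrix.det (Matrix.of fun i j : Fin d => besselI (ν i - μ j))))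
          = (PowerSeries.coeff (N + 1))
              (Matrix.det (Matrix.of fun i j : Fin d => besselI (ν i - μ j))) * (N + 1) :=
        PowerSeries.coeff_derivative _ N
      rw [hder] at hco
      rw [map_sum] at hco
      rw [hco]
      rw [Nat.factorial_succ]
      push_cast
      ring

end Aux

/-- André–Gessel–Zeilberger reflection enumeration for `d` vicious
random-turns walkers: for strictly decreasing `μ, λ ∈ W_d`,
`Σ_{N ≥ 0} Z_d(N; μ, λ) x^N/N! = det(I_{λᵢ − μⱼ}(2x))_{1 ≤ i, j ≤ d}`. -/
theorem stmt11 {d : ℕ} (μ lam : Fin d → ℤ) (hμ : StrictAnti μ) (hlam : StrictAnti lam) :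
    (PowerSeries.mk fun N => (Zd d N μ lam : ℚ) / N.factorial) =
    Matrix.det (Matrix.of fun i j : Fin d => besselI (lam i - μ j)) := by
  ext N
  rw [PowerSeries.coeff_mk]
  rw [main_formula μ hμ N lam (Or.inl hlam)]
  rw [mul_comm, mul_div_assoc]
  have : (N.factorial : ℚ) ≠ 0 := by positivity
  field_simp
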